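/- arXiv:math/0306125 — 2 statements merged into one kernel-verified Lean document; each statement's English description precedes it below -/
import Mathlib

section
/- For every Dyck word D, the number of centered multitunnels of D equals the number of returns (equivalently, arches) of Ψ(D): cmt(D) = ret(Ψ(D)). -/
attribute [local instance] Classical.propDecidable

namespace DyckBij

/-- A word over `Bool` (`true` = up-step `u`, `false` = down-step `d`) is a Dyck word:
equally many `u`'s and `d`'s, and every prefix has at least as many `u`'s as `d`'s. -/
def IsDyck (w : List Bool) : Prop :=
  w.count false = w.count true ∧
    ∀ p : List Bool, p <+: w → p.count false ≤ p.count true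

/-- `Matched w i j`: the `u` at (0-indexed) position `i` of `w` is matched (as in matched
parentheses) with the `d` at position `j`, i.e. `w = A u B d C` with `B` a Dyck word,
`|A| = i` and `j = i + |B| + 1`. -/
def Matched (w : List Bool) (i j : ℕ) : Prop :=
  ∃ A B C : List Bool, IsDyck B ∧ w = A ++ true :: (B ++ false :: C) ∧
    A.length = i ∧ j = i + B.length + 1

/-- Positions `i` and `j` form a matched pair of steps of `w`. -/
def MatchPair (w : List Bool) (i j : ℕ) : Prop :=
  Matched w i j ∨ Matched w j i

/-- The 0-indexed reading order `σ^{(r)}` on a word of length `L`: the first `2r` positions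
are read in order, and the remaining positions are read in zigzag
`2r, L-1, 2r+1, L-2, …` (0-indexed). For `r = 0` this is the zigzag order `σ`. -/
def zigR (r L p : ℕ) : ℕ :=
  if p < 2 * r then p
  else if p % 2 = 0 then p / 2 + r
  else L + r - (p + 1) / 2

/-- The bijection `Ψ_r`: the `p`-th letter of `Ψ_r(w)` is `u` iff the match of the
`σ^{(r)}_p`-th step of `w` does not occur among the previously read steps
`σ^{(r)}_0, …, σ^{(r)}_{p-1}`. -/
noncomputable def psiR (r : ℕ) (w : List Bool) : List Bool :=
  List.ofFn fun p : Fin w.length =>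
    if ∃ p' : ℕ, p' < (p : ℕ) ∧
        MatchPair w (zigR r w.length p') (zigR r w.length (p : ℕ))
    then false else true

/-- The bijection `Ψ = Ψ_0`. -/
noncomputable def psi : List Bool → List Bool := psiR 0

/-- Number of tunnels of `w` with `|A| = |C| + 2r` (midpoint at `x = n + r`),
i.e. decompositions `w = A u B d C` with `B` a Dyck word; tunnels are indexed by `|A|`. -/
noncomputable def tunEq (r : ℕ) (w : List Bool) : ℕ :=
  {i : ℕ | ∃ A B C : List Bool, IsDyck B ∧ w = A ++ true :: (B ++ false :: C) ∧
    A.length = i ∧ A.length = C.length + 2 * r}.ncard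

/-- Number of tunnels of `w` with `|A| > |C| + 2r` (midpoint in `x > n + r`). -/
noncomputable def tunGt (r : ℕ) (w : List Bool) : ℕ :=
  {i : ℕ | ∃ A B C : List Bool, IsDyck B ∧ w = A ++ true :: (B ++ false :: C) ∧
    A.length = i ∧ C.length + 2 * r < A.length}.ncard

/-- Number of tunnels of `w` with `|A| ≤ |C| + 2r` (midpoint in `x ≤ n + r`). -/
noncomputable def tunLe (r : ℕ) (w : List Bool) : ℕ :=
  {i : ℕ | ∃ A B C : List Bool, IsDyck B ∧ w = A ++ true :: (B ++ false :: C) ∧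
    A.length = i ∧ A.length ≤ C.length + 2 * r}.ncard

/-- Number of centered tunnels `ct(w)`. -/
noncomputable def ctun (w : List Bool) : ℕ := tunEq 0 w

/-- Number of right tunnels `rt(w)`. -/
noncomputable def rtun (w : List Bool) : ℕ := tunGt 0 w

/-- Number of left tunnels `lt(w)`: tunnels with `|A| < |C|`. -/
noncomputable def ltun (w : List Bool) : ℕ :=
  {i : ℕ | ∃ A B C : List Bool, IsDyck B ∧ w = A ++ true :: (B ++ false :: C) ∧
    A.length = i ∧ A.length < C.length}.ncard

/-- Number of multitunnels of `w` with `|A| = |C| + 2r` (midpoint at `x = n + r`):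
decompositions `w = A B C` with `B` a nonempty Dyck word, indexed by `(|A|, |B|)`. -/
noncomputable def mtunEq (r : ℕ) (w : List Bool) : ℕ :=
  {q : ℕ × ℕ | ∃ A B C : List Bool, IsDyck B ∧ B ≠ [] ∧ w = A ++ B ++ C ∧
    A.length = q.1 ∧ B.length = q.2 ∧ A.length = C.length + 2 * r}.ncard

/-- Number of centered multitunnels `cmt(w)`. -/
noncomputable def cmtun (w : List Bool) : ℕ := mtunEq 0 w

/-- Number of hills `h(w)`: decompositions `w = X u d Y` with `X, Y` Dyck words. -/
noncomputable def numHills (w : List Bool) : ℕ :=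
  {i : ℕ | ∃ X Y : List Bool, IsDyck X ∧ IsDyck Y ∧
    w = X ++ true :: false :: Y ∧ X.length = i}.ncard

/-- Number of hills of `w` lying in `x > 2r`, i.e. with `|X| ≥ 2r`. -/
noncomputable def numHillsAfter (r : ℕ) (w : List Bool) : ℕ :=
  {i : ℕ | ∃ X Y : List Bool, IsDyck X ∧ IsDyck Y ∧
    w = X ++ true :: false :: Y ∧ X.length = i ∧ 2 * r ≤ X.length}.ncard

/-- Number of arches (equivalently, returns) `ret(w)`: decompositions
`w = X (u B d) Y` with `X, B, Y` Dyck words. -/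
noncomputable def numArches (w : List Bool) : ℕ :=
  {i : ℕ | ∃ X B Y : List Bool, IsDyck X ∧ IsDyck B ∧ IsDyck Y ∧
    w = X ++ true :: (B ++ false :: Y) ∧ X.length = i}.ncard

/-- Number of arches of `w` lying in `x ≥ 2r`, i.e. with `|X| ≥ 2r`. -/
noncomputable def numArchesAfter (r : ℕ) (w : List Bool) : ℕ :=
  {i : ℕ | ∃ X B Y : List Bool, IsDyck X ∧ IsDyck B ∧ IsDyck Y ∧
    w = X ++ true :: (B ++ false :: Y) ∧ X.length = i ∧ 2 * r ≤ X.length}.ncard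

/-- Number of odd rises `odr(w)`: `u`-steps at odd 1-indexed positions
(even 0-indexed positions). -/
noncomputable def oddRises (w : List Bool) : ℕ :=
  {p : ℕ | p < w.length ∧ p % 2 = 0 ∧ w.getD p false = true}.ncard

/-- Number of even rises `er(w)`: `u`-steps at even 1-indexed positions
(odd 0-indexed positions). -/
noncomputable def evenRises (w : List Bool) : ℕ :=
  {p : ℕ | p < w.length ∧ p % 2 = 1 ∧ w.getD p false = true}.ncard

/-- Number of odd rises of `w` at 1-indexed positions `> 2r`. -/
noncomputable def oddRisesAfter (r : ℕ) (w : List Bool) : ℕ :=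
  {p : ℕ | p < w.length ∧ p % 2 = 0 ∧ 2 * r ≤ p ∧ w.getD p false = true}.ncard

/-- Number of even rises of `w` at 1-indexed positions `> 2r`. -/
noncomputable def evenRisesAfter (r : ℕ) (w : List Bool) : ℕ :=
  {p : ℕ | p < w.length ∧ p % 2 = 1 ∧ 2 * r ≤ p ∧ w.getD p false = true}.ncard

/-- Number of `u`-steps of `w` at 1-indexed positions `≤ 2r`. -/
noncomputable def upstepsBefore (r : ℕ) (w : List Bool) : ℕ :=
  {p : ℕ | p < w.length ∧ p < 2 * r ∧ w.getD p false = true}.ncard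

/-- Number of peaks of `w`: occurrences of the factor `u d`. -/
noncomputable def numPeaks (w : List Bool) : ℕ :=
  {i : ℕ | i + 2 ≤ w.length ∧ w.getD i false = true ∧ w.getD (i + 1) true = false}.ncard

/-- Number of occurrences in `w` of a factor of length 3 beginning with `u`
and ending with `d` (occurrences of `u⋆d`). -/
noncomputable def numUStarD (w : List Bool) : ℕ :=
  {i : ℕ | i + 3 ≤ w.length ∧ w.getD i false = true ∧ w.getD (i + 2) true = false}.ncard

/-- `ih(w)`: 1 if `w` begins with the factor `u d`, else 0. -/
noncomputable def initHill (w : List Bool) : ℕ :=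
  if w.take 2 = [true, false] then 1 else 0

/-- `fh(w)`: 1 if `w = X u d` with `X` a Dyck word, else 0. -/
noncomputable def finHill (w : List Bool) : ℕ :=
  if ∃ X : List Bool, IsDyck X ∧ w = X ++ [true, false] then 1 else 0

/-- `π` avoids the pattern 321. -/
def Avoids321 {n : ℕ} (π : Equiv.Perm (Fin n)) : Prop :=
  ¬ ∃ i j k : Fin n, i < j ∧ j < k ∧ π k < π j ∧ π j < π i

/-- `π` avoids the pattern 132. -/
def Avoids132 {n : ℕ} (π : Equiv.Perm (Fin n)) : Prop :=
  ¬ ∃ i j k : Fin n, i < j ∧ j < k ∧ π i < π k ∧ π k < π j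

/-- Number of fixed points of `π`. -/
noncomputable def fixedPts {n : ℕ} (π : Equiv.Perm (Fin n)) : ℕ :=
  {i : Fin n | π i = i}.ncard

/-- Number of excedances of `π`. -/
noncomputable def excedances {n : ℕ} (π : Equiv.Perm (Fin n)) : ℕ :=
  {i : Fin n | i < π i}.ncard

/-- Number of descents of `π`. -/
noncomputable def descents {n : ℕ} (π : Equiv.Perm (Fin n)) : ℕ :=
  {i : ℕ | ∃ (h1 : i < n) (h2 : i + 1 < n), π ⟨i + 1, h2⟩ < π ⟨i, h1⟩}.ncard

/-- `α_r(π) = #{i : π(i) = i + r}` (stated 0-indexed, equivalent to the 1-indexed version). -/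
noncomputable def alphaStat {n : ℕ} (r : ℕ) (π : Equiv.Perm (Fin n)) : ℕ :=
  {i : Fin n | (π i : ℕ) = (i : ℕ) + r}.ncard

/-- `β_r(π) = #{i : i > r, π(i) = i}` (for 1-indexed `i`; 0-indexed this is `r ≤ i`). -/
noncomputable def betaStat {n : ℕ} (r : ℕ) (π : Equiv.Perm (Fin n)) : ℕ :=
  {i : Fin n | r ≤ (i : ℕ) ∧ π i = i}.ncard


section Basics

lemma count_add_count (l : List Bool) : l.count false + l.count true = l.length := by
  induction l with
  | nil => simp
  | cons x xs ih => cases x <;> simp only [List.count_cons, List.length_cons] <;> simp <;> omega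

lemma dyck_nil : IsDyck ([] : List Bool) := by
  refine ⟨by simp, ?_⟩
  intro p hp
  rw [List.prefix_nil.mp hp]; simp

lemma prefix_eq_take {p D : List Bool} (h : p <+: D) : p = D.take p.length :=
  List.prefix_iff_eq_take.mp h

lemma prefix_split {p A B : List Bool} (hp : p <+: A ++ B) :
    p <+: A ∨ ∃ q, p = A ++ q ∧ q <+: B := by
  obtain ⟨t, ht⟩ := hp
  rcases List.append_eq_append_iff.mp ht with ⟨a', h1, h2⟩ | ⟨c', h1, h2⟩
  · exact Or.inl ⟨a', h1.symm⟩
  · exact Or.inr ⟨c', h1, ⟨t, h2.symm⟩⟩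

lemma dyck_append {A B : List Bool} (hA : IsDyck A) (hB : IsDyck B) :
    IsDyck (A ++ B) := by
  refine ⟨by simp [List.count_append, hA.1, hB.1], ?_⟩
  intro p hp
  rcases prefix_split hp with h | ⟨q, rfl, hq⟩
  · exact hA.2 _ h
  · have := hB.2 _ hq
    simp [List.count_append, hA.1]; omega

lemma dyck_of_append_left {X C : List Bool} (h : IsDyck (X ++ C)) (hX : IsDyck X) :
    IsDyck C := by
  constructor
  · have := h.1; simp [List.count_append, hX.1] at this; omega
  · intro p hp
    have := h.2 (X ++ p) ((List.prefix_append_right_inj X).mpr hp)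
    simp [List.count_append, hX.1] at this; omega

lemma dyck_take_le {D : List Bool} (h : IsDyck D) (k : ℕ) :
    (D.take k).count false ≤ (D.take k).count true :=
  h.2 _ (List.take_prefix k D)

lemma dyck_drop_of_take {D : List Bool} (hD : IsDyck D) {k : ℕ}
    (h : IsDyck (D.take k)) : IsDyck (D.drop k) := by
  have h2 := List.take_append_drop k D
  exact dyck_of_append_left (by rwa [h2]) h

lemma prefix_singleton {p : List Bool} {x : Bool} (h : p <+: [x]) :
    p = [] ∨ p = [x] := by
  obtain ⟨t, ht⟩ := h
  match p, t, ht with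
  | [], _, _ => exact Or.inl rfl
  | [y], t, ht =>
    simp only [List.cons_append, List.nil_append, List.cons.injEq] at ht
    exact Or.inr (by rw [ht.1])

lemma dyck_arch {B : List Bool} (hB : IsDyck B) :
    IsDyck (true :: B ++ [false]) := by
  have hform : true :: B ++ [false] = [true] ++ (B ++ [false]) := by simp
  rw [hform]
  refine ⟨by simp [List.count_append, hB.1], ?_⟩
  intro p hp
  rcases prefix_split hp with h | ⟨q, rfl, hq⟩
  · rcases prefix_singleton h with rfl | rfl <;> simp
  · rcases prefix_split hq with h2 | ⟨r, rfl, hr⟩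
    · have := hB.2 _ h2
      simp [List.count_append, List.count_cons]; omega
    · rcases prefix_singleton hr with rfl | rfl <;>
        simp [List.count_append, List.count_cons, hB.1]

end Basics

section FirstReturn

lemma dyck_head {D : List Bool} (hD : IsDyck D) (hne : D ≠ []) :
    ∃ rest, D = true :: rest := by
  match D, hne with
  | (x :: xs), _ =>
    cases x
    · have := hD.2 [false] ⟨xs, rfl⟩; simp at this
    · exact ⟨xs, rfl⟩

lemma dyck_take_of_balanced {D : List Bool} (hD : IsDyck D) {k : ℕ}
    (h : (D.take k).count false = (D.take k).count true) : IsDyck (D.take k) := by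
  exact ⟨h, fun p hp => hD.2 p (hp.trans (List.take_prefix k D))⟩

lemma exists_arch {D : List Bool} (hD : IsDyck D) (hne : D ≠ []) :
    ∃ B C, IsDyck B ∧ IsDyck C ∧ D = true :: (B ++ false :: C) := by
  obtain ⟨rest, hrest⟩ := dyck_head hD hne
  have hlen : 0 < D.length := List.length_pos_iff.mpr hne
  set P : ℕ → Prop := fun t => 0 < t ∧ (D.take t).count false = (D.take t).count true
    with hP
  have hPL : P D.length := ⟨hlen, by rw [List.take_length]; exact hD.1⟩
  have hex : ∃ t, P t := ⟨_, hPL⟩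
  set k := Nat.find hex with hk
  obtain ⟨hk0, hkbal⟩ : P k := Nat.find_spec hex
  have hkmin : ∀ t, t < k → ¬ P t := fun t ht => Nat.find_min hex ht
  have hkL : k ≤ D.length := Nat.find_min' hex hPL
  have hk1 : k ≠ 1 := by
    intro h1
    rw [h1, hrest] at hkbal
    simp at hkbal
  have hk2 : 2 ≤ k := by omega
  -- letter at k-1 is false
  have hklt : k - 1 < D.length := by omega
  have htksucc : D.take k = D.take (k-1) ++ [D[k-1]] := by
    conv_lhs => rw [show k = (k-1) + 1 by omega]
    rw [List.take_succ, List.getElem?_eq_getElem hklt]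
    simp
  have hxfalse : D[k-1] = false := by
    by_contra hx
    have hx' : D[k-1] = true := by revert hx; cases D[k-1] <;> simp
    have h1 := dyck_take_le hD (k-1)
    rw [htksucc, hx'] at hkbal
    simp [List.count_append] at hkbal
    omega
  rw [hxfalse] at htksucc
  -- B
  have htk1 : D.take (k-1) = true :: rest.take (k-2) := by
    rw [hrest, show k - 1 = (k-2) + 1 by omega, List.take_succ_cons]
  set B := rest.take (k-2) with hB
  have hBdyck : IsDyck B := by
    have hbal : B.count false = B.count true := by
      rw [htksucc, htk1] at hkbal
      simp [List.count_append, List.count_cons] at hkbal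
      omega
    refine ⟨hbal, ?_⟩
    intro p hp
    have hpD : (true :: p) <+: D := by
      have h1 : (true :: p) <+: D.take (k-1) := by
        rw [htk1]; exact List.cons_prefix_cons.mpr ⟨rfl, hp⟩
      exact h1.trans (List.take_prefix _ _)
    have hple := hD.2 _ hpD
    simp [List.count_cons] at hple
    rcases eq_or_lt_of_le hple with heq | hlt
    · exfalso
      have hplen : p.length + 1 < k := by
        have := hp.length_le
        have hBlen : B.length ≤ k - 2 := by rw [hB]; exact List.length_take.trans_le (by omega)
        omega
      refine hkmin (p.length + 1) hplen ⟨by omega, ?_⟩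
      have : D.take (p.length + 1) = true :: p := by
        have := prefix_eq_take hpD
        simpa using this.symm
      rw [this]
      simp [List.count_cons]
      omega
    · omega
  have hCdyck : IsDyck (D.drop k) := dyck_drop_of_take hD (dyck_take_of_balanced hD hkbal)
  refine ⟨B, D.drop k, hBdyck, hCdyck, ?_⟩
  calc D = D.take k ++ D.drop k := (List.take_append_drop k D).symm
    _ = (D.take (k-1) ++ [false]) ++ D.drop k := by rw [htksucc]
    _ = true :: (B ++ false :: D.drop k) := by rw [htk1]; simp

end FirstReturn

section Matching

lemma Matched.lt {w : List Bool} {i j : ℕ} (h : Matched w i j) : i < j := by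
  obtain ⟨A, B, C, _, _, _, hj⟩ := h; omega

lemma Matched.lt_length {w : List Bool} {i j : ℕ} (h : Matched w i j) : j < w.length := by
  obtain ⟨A, B, C, _, hw, hi, hj⟩ := h
  subst hw; simp [List.length_append]; omega

lemma Matched.getElem?_fst {w : List Bool} {i j : ℕ} (h : Matched w i j) :
    w[i]? = some true := by
  obtain ⟨A, B, C, _, hw, hi, hj⟩ := h
  subst hw
  rw [List.getElem?_append_right (by omega), show i - A.length = 0 by omega]
  simp

lemma Matched.getElem?_snd {w : List Bool} {i j : ℕ} (h : Matched w i j) :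
    w[j]? = some false := by
  obtain ⟨A, B, C, _, hw, hi, hj⟩ := h
  have hw2 : w = (A ++ true :: B) ++ false :: C := by rw [hw]; simp
  rw [hw2, List.getElem?_append_right
      (by simp only [List.length_append, List.length_cons]; omega),
    show j - (A ++ true :: B).length = 0 by
      simp only [List.length_append, List.length_cons]; omega]
  simp

lemma MatchPair.symm {w : List Bool} {i j : ℕ} (h : MatchPair w i j) :
    MatchPair w j i := h.elim Or.inr Or.inl

lemma matched_shift {P S w : List Bool} {i j : ℕ} (h : Matched w i j) :
    Matched (P ++ w ++ S) (P.length + i) (P.length + j) := by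
  obtain ⟨A, B, C, hB, hw, hi, hj⟩ := h
  exact ⟨P ++ A, B, C ++ S, hB, by rw [hw]; simp, by simp [hi], by omega⟩

lemma matchpair_shift {P S w : List Bool} {i j : ℕ} (h : MatchPair w i j) :
    MatchPair (P ++ w ++ S) (P.length + i) (P.length + j) :=
  h.elim (fun h' => Or.inl (matched_shift h')) (fun h' => Or.inr (matched_shift h'))

lemma dyck_cancel {B B' C C' : List Bool} (hB : IsDyck B) (hB' : IsDyck B')
    (h : B ++ false :: C = B' ++ false :: C') : B = B' := by
  have hpre : B <+: B' ++ false :: C' := ⟨false :: C, h⟩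
  rcases prefix_split hpre with hp | ⟨q, hq, hq2⟩
  · obtain ⟨E, hE⟩ := hp
    have hEd : IsDyck E := dyck_of_append_left (by rwa [← hE] at hB') hB
    match E, hE with
    | [], hE => rw [← hE]; simp
    | (e :: es), hE =>
      exfalso
      obtain ⟨r, hr⟩ := dyck_head hEd (by simp)
      rw [← hE, hr, List.append_assoc] at h
      have h2 := List.append_cancel_left h
      simp at h2
  · match q, hq2 with
    | [], _ => rw [hq]; simp
    | (x :: xs), hq2 =>
      exfalso
      obtain ⟨t, ht⟩ := hq2
      have hx : x = false := by
        have := ht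
        simp only [List.cons_append, List.cons.injEq] at this
        exact this.1
      subst hx
      have hqd : IsDyck (false :: xs) := by
        rw [hq] at hB
        exact dyck_of_append_left hB hB'
      obtain ⟨r, hr⟩ := dyck_head hqd (by simp)
      simp at hr

lemma prefix_of_decomp {w A : List Bool} {rest : List Bool} (hw : w = A ++ rest) :
    A = w.take A.length := by
  rw [hw, List.take_left]

lemma matched_unique_right {w : List Bool} {i j j' : ℕ}
    (h : Matched w i j) (h' : Matched w i j') : j = j' := by
  obtain ⟨A, B, C, hB, hw, hi, hj⟩ := h
  obtain ⟨A', B', C', hB', hw', hi', hj'⟩ := h'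
  have hA : A = A' := by
    have e1 := prefix_of_decomp hw
    have e2 := prefix_of_decomp hw'
    rw [hi] at e1; rw [hi'] at e2; rw [e1, e2]
  subst hA
  rw [hw] at hw'
  have := List.append_cancel_left hw'
  simp only [List.cons.injEq, true_and] at this
  have hBB := dyck_cancel hB hB' this
  rw [hBB] at hj
  omega

lemma matched_unique_left_aux {w : List Bool} {i i' j : ℕ}
    (h : Matched w i j) (h' : Matched w i' j) (hle : i ≤ i') : i = i' := by
  by_contra hne
  have hlt : i < i' := by omega
  obtain ⟨A, B, C, hB, hw, hi, hj⟩ := h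
  obtain ⟨A', B', C', hB', hw', hi', hj'⟩ := h'
  have hd1 : w.drop (i+1) = B ++ false :: C := by
    rw [hw, show A ++ true :: (B ++ false :: C) = (A ++ [true]) ++ (B ++ false :: C) by simp,
      show i + 1 = (A ++ [true]).length by simp [hi]]
    exact List.drop_left
  have hd2 : w.drop i' = true :: (B' ++ false :: C') := by
    rw [hw', show i' = A'.length from hi'.symm]
    exact List.drop_left
  have hBeq : B = (w.drop (i+1)).take B.length := by
    rw [hd1, List.take_left]
  have hkey : B.drop (i' - i - 1) = true :: B' := by
    rw [hBeq, List.drop_take, List.drop_drop,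
      show i + 1 + (i' - i - 1) = i' by omega, hd2,
      show B.length - (i' - i - 1) = B'.length + 1 by omega,
      List.take_succ_cons]
    congr 1
    exact List.take_left' rfl
  have hsplit : B = B.take (i' - i - 1) ++ (true :: B') := by
    conv_lhs => rw [← List.take_append_drop (i' - i - 1) B]
    rw [hkey]
  have hP := hB.2 (B.take (i' - i - 1)) (List.take_prefix _ _)
  have hcB := hB.1
  have hcB' := hB'.1
  rw [hsplit] at hcB
  simp [List.count_append, List.count_cons, hcB'] at hcB
  omega

lemma matched_unique_left {w : List Bool} {i i' j : ℕ}
    (h : Matched w i j) (h' : Matched w i' j) : i = i' := by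
  rcases le_total i i' with hle | hle
  · exact matched_unique_left_aux h h' hle
  · exact (matched_unique_left_aux h' h hle).symm

lemma matchpair_unique {w : List Bool} {i j j' : ℕ}
    (h : MatchPair w i j) (h' : MatchPair w i j') : j = j' := by
  rcases h with h | h <;> rcases h' with h' | h'
  · exact matched_unique_right h h'
  · have := h.getElem?_fst
    rw [h'.getElem?_snd] at this
    simp at this
  · have := h.getElem?_snd
    rw [h'.getElem?_fst] at this
    simp at this
  · exact matched_unique_left h h'

end Matching

section Mu

lemma match_exists_aux : ∀ n (D : List Bool), D.length ≤ n → IsDyck D →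
    ∀ i, i < D.length → ∃ j, MatchPair D i j := by
  intro n
  induction n with
  | zero => intro D hlen _ i hi; omega
  | succ n ih =>
    intro D hlen hD i hi
    have hne : D ≠ [] := by intro h; subst h; simp at hi
    obtain ⟨B, C, hB, hC, hDe⟩ := exists_arch hD hne
    have hL : D.length = B.length + C.length + 2 := by
      rw [hDe]; simp [List.length_append]; omega
    have hmatch0 : Matched D 0 (B.length + 1) :=
      ⟨[], B, C, hB, by simpa using hDe, rfl, by omega⟩
    rcases Nat.lt_trichotomy i (B.length + 1) with h0 | h0 | h0
    · rcases Nat.eq_zero_or_pos i with rfl | hipos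
      · exact ⟨B.length + 1, Or.inl hmatch0⟩
      · obtain ⟨j, hj⟩ := ih B (by omega) hB (i - 1) (by omega)
        have hsh := matchpair_shift (P := [true]) (S := false :: C) hj
        have hform : [true] ++ B ++ false :: C = D := by rw [hDe]; simp
        rw [hform] at hsh
        exact ⟨1 + j, by simpa [show (1:ℕ) + (i-1) = i by omega] using hsh⟩
    · exact ⟨0, Or.inr (h0 ▸ hmatch0)⟩
    · obtain ⟨j, hj⟩ := ih C (by omega) hC (i - (B.length + 2)) (by omega)
      have hsh := matchpair_shift (P := true :: B ++ [false]) (S := ([] : List Bool)) hj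
      have hform : (true :: B ++ [false]) ++ C ++ [] = D := by rw [hDe]; simp
      rw [hform] at hsh
      have hPlen : (true :: B ++ [false]).length = B.length + 2 := by simp
      rw [hPlen] at hsh
      exact ⟨B.length + 2 + j, by simpa [show B.length + 2 + (i - (B.length+2)) = i by omega] using hsh⟩

lemma match_exists {D : List Bool} (hD : IsDyck D) {i : ℕ} (hi : i < D.length) :
    ∃ j, MatchPair D i j :=
  match_exists_aux D.length D le_rfl hD i hi

lemma MatchPair.fst_lt_length {D : List Bool} {i j : ℕ} (h : MatchPair D i j) :
    i < D.length := by
  rcases h with h | h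
  · exact h.lt.trans h.lt_length
  · exact h.lt_length

lemma MatchPair.snd_lt_length {D : List Bool} {i j : ℕ} (h : MatchPair D i j) :
    j < D.length := h.symm.fst_lt_length

lemma MatchPair.ne {D : List Bool} {i j : ℕ} (h : MatchPair D i j) : i ≠ j := by
  rcases h with h | h
  · exact Nat.ne_of_lt h.lt
  · exact Nat.ne_of_gt h.lt

noncomputable def mu (D : List Bool) (i : ℕ) : ℕ :=
  if h : ∃ j, MatchPair D i j then h.choose else 0

lemma mu_spec {D : List Bool} (hD : IsDyck D) {i : ℕ} (hi : i < D.length) :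
    MatchPair D i (mu D i) := by
  have h : ∃ j, MatchPair D i j := match_exists hD hi
  rw [mu, dif_pos h]
  exact h.choose_spec

lemma mu_eq {D : List Bool} {i j : ℕ} (h : MatchPair D i j) : mu D i = j := by
  have hex : ∃ j', MatchPair D i j' := ⟨j, h⟩
  rw [mu, dif_pos hex]
  exact matchpair_unique hex.choose_spec h

lemma mu_lt_length {D : List Bool} (hD : IsDyck D) {i : ℕ} (hi : i < D.length) :
    mu D i < D.length := (mu_spec hD hi).snd_lt_length

lemma mu_mu {D : List Bool} (hD : IsDyck D) {i : ℕ} (hi : i < D.length) :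
    mu D (mu D i) = i := mu_eq (mu_spec hD hi).symm

lemma mu_ne {D : List Bool} (hD : IsDyck D) {i : ℕ} (hi : i < D.length) :
    mu D i ≠ i := fun h => (mu_spec hD hi).ne h.symm

lemma mu_local {D A M C' : List Bool} (hD : IsDyck D) (hM : IsDyck M)
    (hDe : D = A ++ M ++ C') {p : ℕ} (hp1 : A.length ≤ p)
    (hp2 : p < A.length + M.length) :
    A.length ≤ mu D p ∧ mu D p < A.length + M.length := by
  obtain ⟨j, hj⟩ := match_exists hM (show p - A.length < M.length by omega)
  have hjlt : j < M.length := hj.snd_lt_length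
  have hsh := matchpair_shift (P := A) (S := C') hj
  rw [← hDe, show A.length + (p - A.length) = p by omega] at hsh
  rw [mu_eq hsh]
  omega

end Mu

section Zig

lemma IsDyck.length_even {D : List Bool} (h : IsDyck D) : D.length % 2 = 0 := by
  have h1 := count_add_count D
  have h2 := h.1
  omega

noncomputable def zig (L p : ℕ) : ℕ := if p % 2 = 0 then p / 2 else L - (p+1)/2

noncomputable def zigInv (L q : ℕ) : ℕ := if 2*q < L then 2*q else 2*(L-1-q)+1

lemma zigR_zero (L p : ℕ) : zigR 0 L p = zig L p := by
  simp [zigR, zig]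

lemma zig_lt {L p : ℕ} (h : p < L) : zig L p < L := by
  rw [zig]; split <;> omega

lemma zigInv_lt {L q : ℕ} (hL : L % 2 = 0) (h : q < L) : zigInv L q < L := by
  rw [zigInv]; split <;> omega

lemma zig_zigInv {L q : ℕ} (hL : L % 2 = 0) (h : q < L) : zig L (zigInv L q) = q := by
  rw [zigInv]
  split <;> rw [zig] <;> split <;> omega

lemma zigInv_zig {L p : ℕ} (hL : L % 2 = 0) (h : p < L) : zigInv L (zig L p) = p := by
  rw [zig]
  split <;> rw [zigInv] <;> split <;> omega

noncomputable def tau (D : List Bool) (p : ℕ) : ℕ :=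
  zigInv D.length (mu D (zig D.length p))

lemma tau_lt {D : List Bool} (hD : IsDyck D) {p : ℕ} (hp : p < D.length) :
    tau D p < D.length :=
  zigInv_lt hD.length_even (mu_lt_length hD (zig_lt hp))

lemma zig_tau {D : List Bool} (hD : IsDyck D) {p : ℕ} (hp : p < D.length) :
    zig D.length (tau D p) = mu D (zig D.length p) :=
  zig_zigInv hD.length_even (mu_lt_length hD (zig_lt hp))

lemma tau_tau {D : List Bool} (hD : IsDyck D) {p : ℕ} (hp : p < D.length) :
    tau D (tau D p) = p := by
  rw [tau, zig_tau hD hp, mu_mu hD (zig_lt hp), zigInv_zig hD.length_even hp]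

lemma tau_ne {D : List Bool} (hD : IsDyck D) {p : ℕ} (hp : p < D.length) :
    tau D p ≠ p := by
  intro h
  have h2 : zig D.length (tau D p) = zig D.length p := by rw [h]
  rw [zig_tau hD hp] at h2
  exact mu_ne hD (zig_lt hp) h2

lemma psi_length (D : List Bool) : (psi D).length = D.length := by
  simp [psi, psiR]

lemma psi_getElem? {D : List Bool} (hD : IsDyck D) {p : ℕ} (hp : p < D.length) :
    (psi D)[p]? = some (if tau D p < p then false else true) := by
  have hp' : p < D.length := hp
  rw [psi, psiR]
  rw [List.getElem?_ofFn]
  simp only [List.ofFnNthVal, hp, dif_pos]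
  congr 1
  have hiff : (∃ p' : ℕ, p' < p ∧
      MatchPair D (zigR 0 D.length p') (zigR 0 D.length p)) ↔ tau D p < p := by
    constructor
    · rintro ⟨p', hp'lt, hmp⟩
      rw [zigR_zero, zigR_zero] at hmp
      have : mu D (zig D.length p) = zig D.length p' := mu_eq hmp.symm
      have htau : tau D p = p' := by
        rw [tau, this, zigInv_zig hD.length_even (by omega)]
      omega
    · intro h
      refine ⟨tau D p, h, ?_⟩
      rw [zigR_zero, zigR_zero, zig_tau hD hp]
      exact (mu_spec hD (zig_lt hp)).symm
  rcases Classical.em (tau D p < p) with h | h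
  · rw [if_pos h, if_pos (hiff.mpr h)]
  · rw [if_neg h, if_neg (fun hc => h (hiff.mp hc))]

end Zig

section Count

lemma count_take_eq (l : List Bool) (b : Bool) :
    ∀ t, t ≤ l.length → (l.take t).count b =
      ((Finset.range t).filter fun p => l[p]? = some b).card := by
  intro t
  induction t with
  | zero => simp
  | succ t ih =>
    intro ht
    have htl : t < l.length := by omega
    have htake : l.take (t+1) = l.take t ++ [l[t]] := by
      rw [List.take_succ, List.getElem?_eq_getElem htl]; rfl
    rw [htake, List.count_append, ih (by omega), Finset.range_add_one,
      Finset.filter_insert]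
    by_cases hbt : l[t]? = some b
    · rw [if_pos hbt, Finset.card_insert_of_notMem (by simp)]
      have hb : l[t] = b := by
        rw [List.getElem?_eq_getElem htl] at hbt; simpa using hbt
      simp [hb]
    · rw [if_neg hbt]
      have hb : l[t] ≠ b := by
        intro h; exact hbt (by rw [List.getElem?_eq_getElem htl, h])
      have : List.count b [l[t]] = 0 := by
        simp [List.count_singleton]
        simpa using hb
      omega

lemma psi_take_count_true {D : List Bool} (hD : IsDyck D) {t : ℕ} (ht : t ≤ D.length) :
    (((psi D).take t).count true : ℕ) =
      ((Finset.range t).filter fun p => ¬ (tau D p < p)).card := by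
  rw [count_take_eq (psi D) true t (by rw [psi_length]; exact ht)]
  congr 1
  apply Finset.filter_congr
  intro p hp
  have hpt : p < D.length := by
    have := Finset.mem_range.mp hp; omega
  rw [psi_getElem? hD hpt]
  rcases Classical.em (tau D p < p) with h | h
  · simp [if_pos h, h]
  · simp [if_neg h, h]

lemma psi_take_count_false {D : List Bool} (hD : IsDyck D) {t : ℕ} (ht : t ≤ D.length) :
    (((psi D).take t).count false : ℕ) =
      ((Finset.range t).filter fun p => tau D p < p).card := by
  rw [count_take_eq (psi D) false t (by rw [psi_length]; exact ht)]
  congr 1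
  apply Finset.filter_congr
  intro p hp
  have hpt : p < D.length := by
    have := Finset.mem_range.mp hp; omega
  rw [psi_getElem? hD hpt]
  rcases Classical.em (tau D p < p) with h | h
  · simp [if_pos h, h]
  · simp [if_neg h, h]

lemma card_lt_le {D : List Bool} (hD : IsDyck D) {t : ℕ} (ht : t ≤ D.length) :
    ((Finset.range t).filter fun p => tau D p < p).card ≤
      ((Finset.range t).filter fun p => ¬ (tau D p < p)).card := by
  apply Finset.card_le_card_of_injOn (tau D)
  · intro p hp
    simp only [Finset.mem_coe, Finset.mem_filter, Finset.mem_range] at hp ⊢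
    have hpL : p < D.length := by omega
    refine ⟨by omega, ?_⟩
    rw [tau_tau hD hpL]
    omega
  · intro p hp q hq hpq
    simp only [Finset.coe_filter, Set.mem_setOf_eq, Finset.mem_range] at hp hq
    have : tau D (tau D p) = tau D (tau D q) := by rw [hpq]
    rwa [tau_tau hD (by omega), tau_tau hD (by omega)] at this

lemma card_eq_of_closed {D : List Bool} (hD : IsDyck D) {t : ℕ} (ht : t ≤ D.length)
    (hc : ∀ p, p < t → tau D p < t) :
    ((Finset.range t).filter fun p => tau D p < p).card =
      ((Finset.range t).filter fun p => ¬ (tau D p < p)).card := by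
  refine le_antisymm (card_lt_le hD ht) ?_
  apply Finset.card_le_card_of_injOn (tau D)
  · intro p hp
    simp only [Finset.mem_coe, Finset.mem_filter, Finset.mem_range] at hp ⊢
    have hpL : p < D.length := by omega
    have hne := tau_ne hD hpL
    refine ⟨hc p hp.1, ?_⟩
    rw [tau_tau hD hpL]
    omega
  · intro p hp q hq hpq
    simp only [Finset.coe_filter, Set.mem_setOf_eq, Finset.mem_range] at hp hq
    have : tau D (tau D p) = tau D (tau D q) := by rw [hpq]
    rwa [tau_tau hD (by omega), tau_tau hD (by omega)] at this

lemma closed_of_card_eq {D : List Bool} (hD : IsDyck D) {t : ℕ} (ht : t ≤ D.length)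
    (heq : ((Finset.range t).filter fun p => tau D p < p).card =
      ((Finset.range t).filter fun p => ¬ (tau D p < p)).card) :
    ∀ p, p < t → tau D p < t := by
  by_contra hcon
  push_neg at hcon
  obtain ⟨p0, hp0t, hp0⟩ := hcon
  have hp0L : p0 < D.length := by omega
  have hp0mem : p0 ∈ (Finset.range t).filter fun p => ¬ (tau D p < p) := by
    simp only [Finset.mem_filter, Finset.mem_range]
    exact ⟨hp0t, by omega⟩
  have hinj : ((Finset.range t).filter fun p => tau D p < p).card ≤
      (((Finset.range t).filter fun p => ¬ (tau D p < p)).erase p0).card := by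
    apply Finset.card_le_card_of_injOn (tau D)
    · intro p hp
      simp only [Finset.mem_coe, Finset.mem_filter, Finset.mem_range] at hp
      have hpL : p < D.length := by omega
      rw [Finset.mem_coe, Finset.mem_erase]
      refine ⟨?_, ?_⟩
      · intro h
        have : tau D (tau D p) = tau D p0 := by rw [h]
        rw [tau_tau hD hpL] at this
        omega
      · simp only [Finset.mem_filter, Finset.mem_range]
        refine ⟨by omega, ?_⟩
        rw [tau_tau hD hpL]
        omega
    · intro p hp q hq hpq
      simp only [Finset.coe_filter, Set.mem_setOf_eq, Finset.mem_range] at hp hq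
      have : tau D (tau D p) = tau D (tau D q) := by rw [hpq]
      rwa [tau_tau hD (by omega), tau_tau hD (by omega)] at this
  rw [Finset.card_erase_of_mem hp0mem] at hinj
  have hpos : 0 < ((Finset.range t).filter fun p => ¬ (tau D p < p)).card :=
    Finset.card_pos.mpr ⟨p0, hp0mem⟩
  omega

lemma psi_isDyck_take_iff {D : List Bool} (hD : IsDyck D) {t : ℕ} (ht : t ≤ D.length) :
    IsDyck ((psi D).take t) ↔ ∀ p, p < t → tau D p < t := by
  constructor
  · intro h
    apply closed_of_card_eq hD ht
    rw [← psi_take_count_false hD ht, ← psi_take_count_true hD ht]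
    exact h.1
  · intro hc
    constructor
    · rw [psi_take_count_false hD ht, psi_take_count_true hD ht]
      exact card_eq_of_closed hD ht hc
    · intro p hp
      have hpk : p = (psi D).take (min p.length t) := by
        rw [← List.take_take, ← prefix_eq_take hp]
      rw [hpk]
      have hmin : min p.length t ≤ D.length := by omega
      rw [psi_take_count_false hD hmin, psi_take_count_true hD hmin]
      exact card_lt_le hD hmin

lemma psi_isDyck {D : List Bool} (hD : IsDyck D) : IsDyck (psi D) := by
  have := (psi_isDyck_take_iff hD (le_refl D.length)).mpr
    (fun p hp => tau_lt hD hp)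
  rwa [← psi_length D, List.take_length] at this

end Count

section Middle

lemma count_eq_card' (l : List Bool) (b : Bool) :
    l.count b = ((Finset.range l.length).filter fun p => l[p]? = some b).card := by
  have := count_take_eq l b l.length le_rfl
  rwa [List.take_length] at this

lemma zig_mem {L a p : ℕ} (h2a : 2*a ≤ L) (hp : p < 2*a) :
    zig L p < a ∨ L - a ≤ zig L p := by
  rw [zig]; split <;> omega

lemma mu_of_false {D : List Bool} (hD : IsDyck D) {x : ℕ} (hx : x < D.length)
    (hf : D[x]? = some false) : mu D x < x ∧ D[mu D x]? = some true := by
  rcases mu_spec hD hx with h | h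
  · rw [h.getElem?_fst] at hf; simp at hf
  · exact ⟨h.lt, h.getElem?_fst⟩

lemma mu_of_true {D : List Bool} (hD : IsDyck D) {x : ℕ} (hx : x < D.length)
    (ht : D[x]? = some true) : x < mu D x ∧ D[mu D x]? = some false := by
  rcases mu_spec hD hx with h | h
  · exact ⟨h.lt, h.getElem?_snd⟩
  · rw [h.getElem?_snd] at ht; simp at ht

lemma closed_iff_mu_closed {D : List Bool} (hD : IsDyck D) {a : ℕ}
    (ha : 2*a ≤ D.length) :
    (∀ p, p < 2*a → tau D p < 2*a) ↔
      (∀ q, a ≤ q → q < D.length - a → a ≤ mu D q ∧ mu D q < D.length - a) := by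
  set L := D.length with hL
  have hLe : L % 2 = 0 := hD.length_even
  constructor
  · intro h q hq1 hq2
    have hqL : q < L := by omega
    by_contra hbad
    have hmuL : mu D q < L := mu_lt_length hD hqL
    have hcase : mu D q < a ∨ L - a ≤ mu D q := by omega
    have hex : ∃ p, p < 2*a ∧ zig L p = mu D q := by
      rcases hcase with hc | hc
      · exact ⟨2 * mu D q, by omega, by rw [zig]; split <;> omega⟩
      · exact ⟨2 * (L - 1 - mu D q) + 1, by omega, by rw [zig]; split <;> omega⟩
    obtain ⟨p, hp2a, hzp⟩ := hex
    have htp := h p hp2a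
    have htau : tau D p = zigInv L q := by
      rw [tau, ← hL, hzp, mu_mu hD hqL]
    rw [htau] at htp
    have hq' : q = zig L (zigInv L q) := (zig_zigInv hLe hqL).symm
    have := zig_mem (L := L) ha htp
    omega
  · intro h p hp
    have hpL : p < L := by omega
    have hq := zig_mem (L := L) ha hp
    have hqL : zig L p < L := zig_lt hpL
    set q := zig L p with hqdef
    have hmucase : mu D q < a ∨ L - a ≤ mu D q := by
      by_contra hc
      push_neg at hc
      have h2 := h (mu D q) (by omega) (by omega)
      rw [mu_mu hD hqL] at h2
      omega
    have hmuL : mu D q < L := mu_lt_length hD hqL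
    rw [tau, ← hL, ← hqdef, zigInv]
    split <;> omega

lemma middle_decomp (D : List Bool) {a : ℕ} (ha : 2*a ≤ D.length) :
    D = D.take a ++ ((D.drop a).take (D.length - 2*a) ++ D.drop (D.length - a)) := by
  have h1 : D.drop (D.length - a) = (D.drop a).drop (D.length - 2*a) := by
    rw [List.drop_drop]
    congr 1
    omega
  rw [h1, List.take_append_drop, List.take_append_drop]

lemma middle_getElem? (D : List Bool) {a : ℕ} (ha : 2*a ≤ D.length) {q : ℕ}
    (hq : q < D.length - 2*a) :
    ((D.drop a).take (D.length - 2*a))[q]? = D[a + q]? := by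
  rw [List.getElem?_take_of_lt hq, List.getElem?_drop]

lemma middle_length (D : List Bool) {a : ℕ} (ha : 2*a ≤ D.length) :
    ((D.drop a).take (D.length - 2*a)).length = D.length - 2*a := by
  simp
  omega

lemma middle_isDyck_iff {D : List Bool} (hD : IsDyck D) {a : ℕ}
    (ha : 2*a ≤ D.length) :
    IsDyck ((D.drop a).take (D.length - 2*a)) ↔
      (∀ q, a ≤ q → q < D.length - a → a ≤ mu D q ∧ mu D q < D.length - a) := by
  have hMlen : ((D.drop a).take (D.length - 2*a)).length = D.length - 2*a :=
    middle_length D ha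
  constructor
  · intro hMd q hq1 hq2
    have hdec : D = (D.take a ++ (D.drop a).take (D.length - 2*a)) ++
        D.drop (D.length - a) := by
      rw [List.append_assoc]; exact middle_decomp D ha
    have hA : (D.take a).length = a := by rw [List.length_take]; omega
    have h := mu_local hD hMd hdec (p := q) (by rw [hA]; omega)
      (by rw [hA, hMlen]; omega)
    rw [hA, hMlen] at h
    omega
  · intro hcl
    have key : ∀ k, k ≤ D.length - 2*a →
        ((Finset.range k).filter
          (fun q => ((D.drop a).take (D.length - 2*a))[q]? = some false)).card ≤
        ((Finset.range k).filter
          (fun q => ((D.drop a).take (D.length - 2*a))[q]? = some true)).card := by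
      intro k hk
      apply Finset.card_le_card_of_injOn (fun q => mu D (a + q) - a)
      · intro q hq
        simp only [Finset.mem_coe, Finset.mem_filter, Finset.mem_range] at hq ⊢
        obtain ⟨hqk, hqf⟩ := hq
        have hqM : q < D.length - 2*a := by omega
        rw [middle_getElem? D ha hqM] at hqf
        have haq : a + q < D.length := by omega
        obtain ⟨hlt, htrue⟩ := mu_of_false hD haq hqf
        obtain ⟨hc1, hc2⟩ := hcl (a+q) (by omega) (by omega)
        refine ⟨by omega, ?_⟩
        rw [middle_getElem? D ha (by omega),
          show a + (mu D (a+q) - a) = mu D (a+q) by omega]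
        exact htrue
      · intro q hq q' hq' heq
        have heqr : mu D (a + q) - a = mu D (a + q') - a := heq
        simp only [Finset.coe_filter, Set.mem_setOf_eq, Finset.mem_range] at hq hq'
        obtain ⟨hqk, hqf⟩ := hq
        obtain ⟨hq'k, hq'f⟩ := hq'
        have h1 := hcl (a+q) (by omega) (by omega)
        have h2 := hcl (a+q') (by omega) (by omega)
        have hmeq : mu D (a+q) = mu D (a+q') := by omega
        have e1 : mu D (mu D (a+q)) = mu D (mu D (a+q')) := by rw [hmeq]
        rw [mu_mu hD (by omega), mu_mu hD (by omega)] at e1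
        omega
    have keyrev :
        ((Finset.range (D.length-2*a)).filter
          (fun q => ((D.drop a).take (D.length - 2*a))[q]? = some true)).card ≤
        ((Finset.range (D.length-2*a)).filter
          (fun q => ((D.drop a).take (D.length - 2*a))[q]? = some false)).card := by
      apply Finset.card_le_card_of_injOn (fun q => mu D (a + q) - a)
      · intro q hq
        simp only [Finset.mem_coe, Finset.mem_filter, Finset.mem_range] at hq ⊢
        obtain ⟨hqk, hqt⟩ := hq
        rw [middle_getElem? D ha hqk] at hqt
        have haq : a + q < D.length := by omega
        obtain ⟨hlt, hfalse⟩ := mu_of_true hD haq hqt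
        obtain ⟨hc1, hc2⟩ := hcl (a+q) (by omega) (by omega)
        refine ⟨by omega, ?_⟩
        rw [middle_getElem? D ha (by omega),
          show a + (mu D (a+q) - a) = mu D (a+q) by omega]
        exact hfalse
      · intro q hq q' hq' heq
        have heqr : mu D (a + q) - a = mu D (a + q') - a := heq
        simp only [Finset.coe_filter, Set.mem_setOf_eq, Finset.mem_range] at hq hq'
        obtain ⟨hqk, hqf⟩ := hq
        obtain ⟨hq'k, hq'f⟩ := hq'
        have h1 := hcl (a+q) (by omega) (by omega)
        have h2 := hcl (a+q') (by omega) (by omega)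
        have hmeq : mu D (a+q) = mu D (a+q') := by omega
        have e1 : mu D (mu D (a+q)) = mu D (mu D (a+q')) := by rw [hmeq]
        rw [mu_mu hD (by omega), mu_mu hD (by omega)] at e1
        omega
    constructor
    · rw [count_eq_card' _ false, count_eq_card' _ true, hMlen]
      exact le_antisymm (key (D.length-2*a) le_rfl) keyrev
    · intro p hp
      have hple : p.length ≤ D.length - 2*a := by
        have := hp.length_le; omega
      have hpk : p = ((D.drop a).take (D.length - 2*a)).take p.length :=
        prefix_eq_take hp
      rw [hpk]
      have hmin : p.length ≤ ((D.drop a).take (D.length - 2*a)).length := by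
        rw [hMlen]; omega
      rw [count_take_eq _ false _ hmin, count_take_eq _ true _ hmin]
      exact key _ hple

end Middle

section Final

lemma even_of_isDyck_take {W : List Bool} {t : ℕ} (ht : t ≤ W.length)
    (h : IsDyck (W.take t)) : t % 2 = 0 := by
  have h1 := count_add_count (W.take t)
  have h2 : (W.take t).length = t := by rw [List.length_take]; omega
  have h3 := h.1
  omega

lemma key_iff {D : List Bool} (hD : IsDyck D) {a : ℕ} (ha : 2*a ≤ D.length) :
    IsDyck ((psi D).take (2*a)) ↔ IsDyck ((D.drop a).take (D.length - 2*a)) := by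
  rw [psi_isDyck_take_iff hD ha, closed_iff_mu_closed hD ha,
    ← middle_isDyck_iff hD ha]

lemma numArches_set {W : List Bool} (hW : IsDyck W) :
    {i : ℕ | ∃ X B Y : List Bool, IsDyck X ∧ IsDyck B ∧ IsDyck Y ∧
      W = X ++ true :: (B ++ false :: Y) ∧ X.length = i} =
    {i : ℕ | i < W.length ∧ IsDyck (W.take i)} := by
  ext i
  simp only [Set.mem_setOf_eq]
  constructor
  · rintro ⟨X, B, Y, hX, hB, hY, hW2, rfl⟩
    constructor
    · rw [hW2]; simp [List.length_append]
    · rw [← prefix_of_decomp hW2]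
      exact hX
  · rintro ⟨hi, hXd⟩
    have hdrop : IsDyck (W.drop i) := dyck_drop_of_take hW hXd
    have hne : W.drop i ≠ [] := by
      intro h
      have := (List.length_drop : (W.drop i).length = W.length - i)
      rw [h] at this
      simp at this
      omega
    obtain ⟨B, Y, hB, hY, hBY⟩ := exists_arch hdrop hne
    refine ⟨W.take i, B, Y, hXd, hB, hY, ?_, ?_⟩
    · conv_lhs => rw [← List.take_append_drop i W]
      rw [hBY]
    · rw [List.length_take]; omega

lemma arch_set_eq_image {D : List Bool} (hD : IsDyck D) :
    {i : ℕ | i < (psi D).length ∧ IsDyck ((psi D).take i)} =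
      (fun a => 2*a) '' {a : ℕ | 2*a < D.length ∧
        IsDyck ((D.drop a).take (D.length - 2*a))} := by
  ext i
  simp only [Set.mem_setOf_eq, Set.mem_image, psi_length]
  constructor
  · rintro ⟨hi, hdy⟩
    have heven : i % 2 = 0 :=
      even_of_isDyck_take (by rw [psi_length]; omega) hdy
    refine ⟨i / 2, ⟨by omega, ?_⟩, by omega⟩
    rw [← key_iff hD (by omega), show 2 * (i/2) = i by omega]
    exact hdy
  · rintro ⟨a, ⟨ha, hdy⟩, rfl⟩
    exact ⟨ha, (key_iff hD (by omega)).mpr hdy⟩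

lemma cmt_set_eq_image {D : List Bool} (hD : IsDyck D) :
    {q : ℕ × ℕ | ∃ A B C : List Bool, IsDyck B ∧ B ≠ [] ∧ D = A ++ B ++ C ∧
      A.length = q.1 ∧ B.length = q.2 ∧ A.length = C.length + 2 * 0} =
      (fun a => (a, D.length - 2*a)) '' {a : ℕ | 2*a < D.length ∧
        IsDyck ((D.drop a).take (D.length - 2*a))} := by
  ext q
  simp only [Set.mem_setOf_eq, Set.mem_image]
  constructor
  · rintro ⟨A, B, C, hB, hBne, hDe, h1, h2, h3⟩
    have hlen : D.length = A.length + B.length + C.length := by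
      rw [hDe]; simp [List.length_append]; omega
    have hBpos : 0 < B.length := List.length_pos_iff.mpr hBne
    have hAC : A.length = C.length := by omega
    have hdrop : D.drop A.length = B ++ C := by
      rw [hDe, List.append_assoc, show A.length = A.length from rfl]
      exact List.drop_left
    have hmid : (D.drop A.length).take (D.length - 2*A.length) = B := by
      rw [hdrop, show D.length - 2*A.length = B.length by omega]
      exact List.take_left
    refine ⟨A.length, ⟨by omega, by rw [hmid]; exact hB⟩, ?_⟩
    have : q = (A.length, B.length) := by
      rcases q with ⟨q1, q2⟩
      simp at h1 h2
      simp [h1, h2]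
    rw [this]
    simp
    omega
  · rintro ⟨a, ⟨ha, hdy⟩, rfl⟩
    refine ⟨D.take a, (D.drop a).take (D.length - 2*a), D.drop (D.length - a),
      hdy, ?_, ?_, ?_, ?_, ?_⟩
    · intro h
      have := middle_length D (by omega : 2*a ≤ D.length)
      rw [h] at this
      simp at this
      omega
    · rw [List.append_assoc]
      exact middle_decomp D (by omega)
    · simp; omega
    · exact middle_length D (by omega)
    · rw [List.length_take, List.length_drop]
      omega

end Final

/-- for every Dyck word `D`, `cmt(D) = ret(Ψ(D))`. -/
theorem cmtun_eq_numArches_psi (D : List Bool) (hD : IsDyck D) :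
    cmtun D = numArches (psi D) := by
  rw [cmtun, mtunEq, numArches, cmt_set_eq_image hD]
  have h2 := numArches_set (psi_isDyck hD)
  rw [h2, arch_set_eq_image hD]
  rw [Set.ncard_image_of_injective _ (fun a b h => by
    simpa using congrArg Prod.fst h : Function.Injective (fun a => (a, D.length - 2*a)))]
  rw [Set.ncard_image_of_injective _ (fun a b h => by
    have h' : 2*a = 2*b := h
    omega : Function.Injective (fun a : ℕ => 2*a))]

end DyckBij
end

section
/- Let r ≥ 0 and let D = ABC be a Dyck word, where B is a Dyck word and length(A) = length(C) + 2r. Then Ψ_r(ABC) = Ψ_r(AC)·Ψ_0(B) (concatenation of words). -/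
attribute [local instance] Classical.propDecidable

namespace DyckBij

def ht (w : List Bool) (k : ℕ) : ℤ :=
  ((w.take k).count true : ℤ) - ((w.take k).count false : ℤ)
lemma ht_zero (w : List Bool) : ht w 0 = 0 := by simp [ht]
lemma ht_append (x y : List Bool) (m : ℕ) :
    ht (x ++ y) (x.length + m) = ht x x.length + ht y m := by
  simp [ht, List.take_append, List.count_append, List.take_length, List.take_of_length_le]
  ring
lemma ht_take_le (x y : List Bool) (k : ℕ) (h : k ≤ x.length) :
    ht (x ++ y) k = ht x k := by
  simp [ht, List.take_append_of_le_length h]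
lemma ht_succ (w : List Bool) (k : ℕ) (h : k < w.length) :
    ht w (k+1) = ht w k + (if w.getD k false = true then 1 else -1) := by
  have h2 : w.take (k+1) = w.take k ++ [w[k]] := by
    rw [List.take_succ, List.getElem?_eq_getElem h]; rfl
  have h3 : w.getD k false = w[k] := List.getD_eq_getElem _ _ h
  simp only [ht, h2, h3, List.count_append]
  rcases Bool.eq_false_or_eq_true (w[k]'h) with hb | hb <;> simp [hb] <;> ring
lemma ht_of_le (w : List Bool) (k : ℕ) (h : w.length ≤ k) : ht w k = ht w w.length := by
  simp [ht, List.take_of_length_le h, List.take_length]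
lemma isDyck_iff (w : List Bool) :
    IsDyck w ↔ ht w w.length = 0 ∧ ∀ k, 0 ≤ ht w k := by
  constructor
  · rintro ⟨h1, h2⟩
    constructor
    · simp [ht, List.take_length]; omega
    · intro k
      have := h2 (w.take k) (List.take_prefix k w)
      simp [ht]; omega
  · rintro ⟨h1, h2⟩
    constructor
    · have := h1; simp [ht, List.take_length] at this; omega
    · intro p hp
      rw [List.prefix_iff_eq_take] at hp
      have := h2 p.length
      rw [hp]; simp [ht] at this ⊢; omega

lemma ht_drop (w : List Bool) (s m : ℕ) :
    ht w (s + m) = ht w s + ht (w.drop s) m := by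
  simp [ht, List.take_add, List.count_append]; ring

lemma ht_take (x : List Bool) (t m : ℕ) (h : m ≤ t) :
    ht (x.take t) m = ht x m := by
  simp [ht, List.take_take, Nat.min_eq_left h]

lemma matched_iff (w : List Bool) (i j : ℕ) :
    Matched w i j ↔ i < j ∧ j < w.length ∧ ht w (j+1) = ht w i ∧
      ∀ k, i < k → k ≤ j → ht w i < ht w k := by
  constructor
  · rintro ⟨A, B, C, hB, rfl, rfl, rfl⟩
    obtain ⟨hB0, hBpos⟩ := (isDyck_iff B).mp hB
    have hlen : (A ++ true :: (B ++ false :: C)).length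
        = A.length + B.length + 2 + C.length := by simp; omega
    have hi : ht (A ++ true :: (B ++ false :: C)) A.length = ht A A.length := by
      rw [ht_take_le _ _ _ le_rfl]
    -- key: ht at A.length + 1 + m for m ≤ B.length
    have key : ∀ m, m ≤ B.length →
        ht (A ++ true :: (B ++ false :: C)) (A.length + (1 + m))
          = ht A A.length + 1 + ht B m := by
      intro m hm
      rw [ht_append]
      have : ht (true :: (B ++ false :: C)) (1 + m)
          = 1 + ht (B ++ false :: C) m := by
        have := ht_append [true] (B ++ false :: C) m
        simpa [ht] using this
      rw [this, ht_take_le _ _ _ hm]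
      ring
    have hend : ht (A ++ true :: (B ++ false :: C)) (A.length + (1 + (B.length + 1)))
        = ht A A.length := by
      rw [ht_append]
      have e1 : ht (true :: (B ++ false :: C)) (1 + (B.length + 1))
          = 1 + ht (B ++ false :: C) (B.length + 1) := by
        have := ht_append [true] (B ++ false :: C) (B.length + 1)
        simpa [ht] using this
      have e2 : ht (B ++ false :: C) (B.length + 1)
          = ht B B.length + ht (false :: C) 1 := ht_append B (false :: C) 1
      have e3 : ht (false :: C) 1 = -1 := by simp [ht]
      rw [e1, e2, e3, hB0]; ring
    refine ⟨by omega, by omega, ?_, ?_⟩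
    · have : A.length + B.length + 1 + 1 = A.length + (1 + (B.length + 1)) := by omega
      rw [this, hend, hi]
    · intro k hk1 hk2
      have hm : k - A.length - 1 ≤ B.length := by omega
      have : k = A.length + (1 + (k - A.length - 1)) := by omega
      rw [this, key _ hm, hi]
      have := hBpos (k - A.length - 1)
      omega
  · rintro ⟨hij, hjlen, hend, hmid⟩
    have hilen : i < w.length := lt_trans hij hjlen
    -- step at i is up
    have hstepi := ht_succ w i hilen
    have hi1 : ht w i < ht w (i+1) := hmid (i+1) (by omega) (by omega)
    have hwi : w.getD i false = true := by
      by_contra hc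
      rw [hstepi, if_neg hc] at hi1; omega
    have hup : ht w (i+1) = ht w i + 1 := by rw [hstepi, if_pos hwi]
    -- step at j is down
    have hstepj := ht_succ w j hjlen
    have hj1 : ht w i < ht w j := hmid j hij le_rfl
    have hwj : w.getD j false = false := by
      rcases Bool.eq_false_or_eq_true (w.getD j false) with h | h
      · rw [hstepj, if_pos h] at hend; omega
      · exact h
    have hwj' : ¬ (w.getD j false = true) := by rw [hwj]; exact Bool.false_ne_true
    have hjval : ht w j = ht w i + 1 := by
      rw [hstepj, if_neg hwj'] at hend; omega
    refine ⟨w.take i, (w.drop (i+1)).take (j-i-1), w.drop (j+1), ?_, ?_, ?_, ?_⟩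
    · -- B' is Dyck
      set B' := (w.drop (i+1)).take (j-i-1) with hB'
      have hB'len : B'.length = j - i - 1 := by
        simp [hB', List.length_take, List.length_drop]; omega
      have hval : ∀ m, m ≤ j - i - 1 → ht B' m = ht w (i+1+m) - ht w (i+1) := by
        intro m hm
        rw [hB', ht_take _ _ _ hm]
        have := ht_drop w (i+1) m
        omega
      rw [isDyck_iff]
      constructor
      · rw [hB'len, hval _ le_rfl]
        have : i + 1 + (j - i - 1) = j := by omega
        rw [this, hjval, hup]; ring
      · intro k
        rcases le_or_gt k B'.length with h | h
        · rw [hval k (by omega)]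
          rcases Nat.eq_zero_or_pos k with rfl | hk
          · simp
          · have := hmid (i+1+k) (by omega) (by omega)
            omega
        · rw [ht_of_le _ _ (le_of_lt h), hB'len, hval _ le_rfl]
          have : i + 1 + (j - i - 1) = j := by omega
          rw [this, hjval, hup]; simp
    · -- decomposition
      have e1 : w = w.take i ++ w.drop i := (List.take_append_drop i w).symm
      have e2 : w.drop i = w[i] :: w.drop (i+1) := List.drop_eq_getElem_cons hilen
      have e3 : w.drop (i+1) = (w.drop (i+1)).take (j-i-1) ++ (w.drop (i+1)).drop (j-i-1) :=
        (List.take_append_drop _ _).symm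
      have e4 : (w.drop (i+1)).drop (j-i-1) = w.drop j := by
        rw [List.drop_drop]; congr 1; omega
      have e5 : w.drop j = w[j] :: w.drop (j+1) := List.drop_eq_getElem_cons hjlen
      have hwi' : w[i] = true := by rw [← List.getD_eq_getElem _ false hilen]; exact hwi
      have hwj' : w[j] = false := by rw [← List.getD_eq_getElem _ false hjlen]; exact hwj
      calc w = w.take i ++ w.drop i := e1
        _ = w.take i ++ w[i] :: w.drop (i+1) := by rw [← e2]
        _ = w.take i ++ w[i] :: ((w.drop (i+1)).take (j-i-1) ++ w[j] :: w.drop (j+1)) := by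
              rw [← e5, ← e4, ← e3]
        _ = w.take i ++ true :: ((w.drop (i+1)).take (j-i-1) ++ false :: w.drop (j+1)) := by
              rw [hwi', hwj']
    · exact List.length_take_of_le (le_of_lt hilen)
    · simp [List.length_take, List.length_drop]; omega
section Transfer
variable (A B C : List Bool)

lemma ht_low (x : ℕ) (hx : x ≤ A.length) : ht (A++B++C) x = ht (A++C) x := by
  rw [List.append_assoc, ht_take_le _ _ _ hx, ht_take_le _ _ _ hx]

lemma ht_shift (hB : IsDyck B) (x : ℕ) (hx : A.length ≤ x) :
    ht (A++B++C) (x + B.length) = ht (A++C) x := by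
  have hb0 := ((isDyck_iff B).mp hB).1
  have e1 : x + B.length = (A++B).length + (x - A.length) := by simp; omega
  have e2 : x = A.length + (x - A.length) := by omega
  have e3 : ht (A++B) (A++B).length = ht A A.length + ht B B.length := by
    rw [List.length_append]; exact ht_append A B B.length
  rw [e1, ht_append, e3, hb0]
  conv_rhs => rw [e2, ht_append]
  ring

lemma ht_mid (x : ℕ) (hx : x ≤ B.length) :
    ht (A++B++C) (A.length + x) = ht (A++B++C) A.length + ht B x := by
  have h1 : ht (A++(B++C)) (A.length + x) = ht A A.length + ht B x := by
    rw [ht_append, ht_take_le _ _ _ hx]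
  have h2 : ht (A++(B++C)) A.length = ht A A.length := by
    have := ht_append A (B++C) 0
    simpa [ht_zero] using this
  rw [List.append_assoc, h1, h2]

lemma matched_mid (hB : IsDyck B) (i j : ℕ) (hi : i < B.length) (hj : j < B.length) :
    Matched (A++B++C) (A.length + i) (A.length + j) ↔ Matched B i j := by
  have hlen : (A++B++C).length = A.length + B.length + C.length := by simp; omega
  rw [matched_iff, matched_iff]
  have hmi := ht_mid A B C i (le_of_lt hi)
  have hmj := ht_mid A B C (j+1) (by omega)
  constructor
  · rintro ⟨h1, h2, h3, h4⟩
    refine ⟨by omega, hj, ?_, ?_⟩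
    · have : A.length + j + 1 = A.length + (j+1) := by omega
      rw [this, hmj] at h3; rw [hmi] at h3; omega
    · intro k hk1 hk2
      have := h4 (A.length + k) (by omega) (by omega)
      rw [hmi, ht_mid A B C k (by omega)] at this; omega
  · rintro ⟨h1, h2, h3, h4⟩
    refine ⟨by omega, by omega, ?_, ?_⟩
    · have e : A.length + j + 1 = A.length + (j+1) := by omega
      rw [e, hmj, hmi]; omega
    · intro k hk1 hk2
      have hka : A.length ≤ k := by omega
      have e : k = A.length + (k - A.length) := by omega
      rw [hmi, e, ht_mid A B C (k - A.length) (by omega)]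
      have := h4 (k - A.length) (by omega) (by omega)
      omega

lemma no_cross_left (hB : IsDyck B) (i j : ℕ) (hi : i < A.length)
    (hj1 : A.length ≤ j) (hj2 : j < A.length + B.length) :
    ¬ Matched (A++B++C) i j := by
  obtain ⟨hb0, hbpos⟩ := (isDyck_iff B).mp hB
  rw [matched_iff]
  rintro ⟨h1, h2, h3, h4⟩
  have ha := h4 A.length hi hj1
  have hmj := ht_mid A B C (j + 1 - A.length) (by omega)
  have e : j + 1 = A.length + (j + 1 - A.length) := by omega
  rw [e, hmj] at h3
  have := hbpos (j + 1 - A.length)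
  omega

lemma no_cross_right (hB : IsDyck B) (i j : ℕ) (hi1 : A.length ≤ i)
    (hi2 : i < A.length + B.length) (hj : A.length + B.length ≤ j) :
    ¬ Matched (A++B++C) i j := by
  obtain ⟨hb0, hbpos⟩ := (isDyck_iff B).mp hB
  rw [matched_iff]
  rintro ⟨h1, h2, h3, h4⟩
  have hab := h4 (A.length + B.length) (by omega) hj
  have e : A.length + B.length = A.length + B.length := rfl
  have h5 := ht_mid A B C B.length le_rfl
  have h6 := ht_mid A B C (i - A.length) (by omega)
  have e2 : i = A.length + (i - A.length) := by omega
  rw [h5, hb0] at hab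
  rw [e2, h6] at hab
  have := hbpos (i - A.length)
  omega

lemma no_cross (hB : IsDyck B) (x y : ℕ) (hx1 : A.length ≤ x) (hx2 : x < A.length + B.length)
    (hy : y < A.length ∨ A.length + B.length ≤ y) :
    ¬ MatchPair (A++B++C) x y := by
  rintro (h | h)
  · rcases hy with hy | hy
    · have : x < y := ((matched_iff _ _ _).mp h).1
      omega
    · exact no_cross_right A B C hB x y hx1 hx2 hy h
  · rcases hy with hy | hy
    · exact no_cross_left A B C hB y x hy hx1 hx2 h
    · have : y < x := ((matched_iff _ _ _).mp h).1
      omega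

end Transfer

/-- shift indices past `a` by `b` -/
def phiIdx (a b x : ℕ) : ℕ := if x < a then x else x + b

lemma phiIdx_lt (a b : ℕ) {x y : ℕ} : phiIdx a b x < phiIdx a b y ↔ x < y := by
  unfold phiIdx; split_ifs <;> omega

lemma phiIdx_le (a b : ℕ) {x y : ℕ} : phiIdx a b x ≤ phiIdx a b y ↔ x ≤ y := by
  unfold phiIdx; split_ifs <;> omega

section Outer
variable (A B C : List Bool)

lemma ht_phi (hB : IsDyck B) (x : ℕ) :
    ht (A++B++C) (phiIdx A.length B.length x) = ht (A++C) x := by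
  unfold phiIdx
  split_ifs with h
  · exact ht_low A B C x (le_of_lt h)
  · exact ht_shift A B C hB x (by omega)

lemma ht_phi_succ (hB : IsDyck B) (x : ℕ) :
    ht (A++B++C) (phiIdx A.length B.length x + 1) = ht (A++C) (x + 1) := by
  unfold phiIdx
  split_ifs with h
  · rcases Nat.lt_or_ge (x+1) A.length with h2 | h2
    · exact ht_low A B C (x+1) (le_of_lt h2)
    · have hx : x + 1 = A.length := by omega
      rw [hx]; exact ht_low A B C A.length le_rfl
  · rw [show x + B.length + 1 = (x + 1) + B.length by omega]
    exact ht_shift A B C hB (x+1) (by omega)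

lemma matched_outer (hB : IsDyck B) (i j : ℕ) (hj : j < A.length + C.length) :
    Matched (A++C) i j ↔
      Matched (A++B++C) (phiIdx A.length B.length i) (phiIdx A.length B.length j) := by
  obtain ⟨hb0, hbpos⟩ := (isDyck_iff B).mp hB
  have hlenw : (A++B++C).length = A.length + B.length + C.length := by simp; omega
  have hlenv : (A++C).length = A.length + C.length := by simp
  have hphi := ht_phi A B C hB
  have hphi1 := ht_phi_succ A B C hB
  have hmid := ht_mid A B C
  rw [matched_iff, matched_iff]
  constructor
  · rintro ⟨h1, h2, h3, h4⟩
    refine ⟨(phiIdx_lt _ _).mpr h1, ?_, ?_, ?_⟩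
    · unfold phiIdx; split_ifs <;> omega
    · rw [hphi1 j, hphi i]; exact h3
    · intro k hk1 hk2
      rw [hphi i]
      -- three zones for k
      rcases Nat.lt_or_ge k A.length with hka | hka
      · -- k ≤ A.length : k = phiIdx k
        have hkphi : phiIdx A.length B.length k = k := by
          unfold phiIdx; split_ifs <;> omega
        rw [← hkphi, hphi k]
        apply h4 k
        · have h' := hk1; unfold phiIdx at h'; split_ifs at h' <;> omega
        · have h' := hk2; unfold phiIdx at h'; split_ifs at h' <;> omega
      · rcases Nat.lt_or_ge k (A.length + B.length) with hkb | hkb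
        · -- middle zone : ht w k = ht w a + ht B (k - a) >= ht w a = ht v a > ht v i
          have e : k = A.length + (k - A.length) := by omega
          rw [e, hmid (k - A.length) (by omega)]
          have ha' : ht (A++B++C) A.length = ht (A++C) A.length := ht_low A B C _ le_rfl
          have hia : i < A.length := by
            have := hk1; unfold phiIdx at this; split_ifs at this <;> omega
          have haj : A.length ≤ j := by
            have := hk2; unfold phiIdx at this; split_ifs at this <;> omega
          have := h4 A.length hia haj
          have := hbpos (k - A.length)
          omega
        · -- high zone : k = phiIdx (k - b)
          have hkphi : phiIdx A.length B.length (k - B.length) = k := by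
            unfold phiIdx; split_ifs <;> omega
          rw [← hkphi, hphi (k - B.length)]
          apply h4 (k - B.length)
          · have := hk1; unfold phiIdx at this; split_ifs at this <;> omega
          · have := hk2; unfold phiIdx at this; split_ifs at this <;> omega
  · rintro ⟨h1, h2, h3, h4⟩
    refine ⟨(phiIdx_lt _ _).mp h1, by omega, ?_, ?_⟩
    · rw [hphi1 j, hphi i] at h3; exact h3
    · intro k hk1 hk2
      rw [← hphi i, ← hphi k]
      exact h4 _ ((phiIdx_lt _ _).mpr hk1) ((phiIdx_le _ _).mpr hk2)

end Outer

lemma zig_outer (r b c p : ℕ) (hp : p < 2*c+2*r) :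
    zigR r (2*c+2*r+b) p = phiIdx (c+2*r) b (zigR r (2*c+2*r) p) := by
  unfold zigR phiIdx
  split_ifs <;> omega

lemma zig_outer_range (r b c p : ℕ) (hp : p < 2*c+2*r) :
    zigR r (2*c+2*r+b) p < c+2*r ∨ c+2*r+b ≤ zigR r (2*c+2*r+b) p := by
  unfold zigR
  split_ifs <;> omega

lemma zig_range (r c p : ℕ) (hp : p < 2*c+2*r) :
    zigR r (2*c+2*r) p < 2*c+2*r := by
  unfold zigR
  split_ifs <;> omega

lemma zig_inner (r b c q : ℕ) (hq : q < b) :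
    zigR r (2*c+2*r+b) (2*c+2*r+q) = (c+2*r) + zigR 0 b q := by
  unfold zigR
  split_ifs <;> omega

lemma zig_inner_range (b q : ℕ) (hq : q < b) : zigR 0 b q < b := by
  unfold zigR
  split_ifs <;> omega

section Main
variable (A B C : List Bool)

lemma matchpair_outer (hB : IsDyck B) (i j : ℕ) (hi : i < A.length + C.length)
    (hj : j < A.length + C.length) :
    MatchPair (A++C) i j ↔
      MatchPair (A++B++C) (phiIdx A.length B.length i) (phiIdx A.length B.length j) := by
  unfold MatchPair
  rw [matched_outer A B C hB i j hj, matched_outer A B C hB j i hi]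

lemma matchpair_mid (hB : IsDyck B) (i j : ℕ) (hi : i < B.length) (hj : j < B.length) :
    MatchPair (A++B++C) (A.length + i) (A.length + j) ↔ MatchPair B i j := by
  unfold MatchPair
  rw [matched_mid A B C hB i j hi hj, matched_mid A B C hB j i hj hi]



/-- let `r ≥ 0` and let `D = ABC` be a Dyck word with `B` a Dyck word and
`|A| = |C| + 2r`. Then `Ψ_r(ABC) = Ψ_r(AC)·Ψ_0(B)`. -/
theorem psiR_append (r : ℕ) (A B C : List Bool) (hABC : IsDyck (A ++ B ++ C)) (hB : IsDyck B)
    (hAC : A.length = C.length + 2 * r) :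
    psiR r (A ++ B ++ C) = psiR r (A ++ C) ++ psiR 0 B := by
  have hwlen : (A ++ B ++ C).length = 2*C.length + 2*r + B.length := by
    simp [hAC]; omega
  have hvlen : (A ++ C).length = 2*C.length + 2*r := by simp [hAC]; omega
  have hvlen' : (psiR r (A ++ C)).length = 2*C.length + 2*r := by
    simp [psiR, hvlen]
  have hblen : (psiR 0 B).length = B.length := by simp [psiR]
  apply List.ext_getElem
  · simp [psiR, hwlen, hvlen]; omega
  intro p hp hq
  have hplen : (psiR r (A++B++C)).length = 2*C.length + 2*r + B.length := by
    simp only [psiR, List.length_ofFn]; exact hwlen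
  have hp' : p < 2*C.length + 2*r + B.length := by omega
  have hgl : (psiR r (A++B++C))[p] =
      (if ∃ p' : ℕ, p' < p ∧
        MatchPair (A++B++C) (zigR r (A++B++C).length p') (zigR r (A++B++C).length p)
      then false else true) := by
    simp only [psiR, List.getElem_ofFn]
  rw [hgl]
  rcases Nat.lt_or_ge p (2*C.length + 2*r) with hcase | hcase
  · -- outer part
    have hr : (psiR r (A++C) ++ psiR 0 B)[p] = (psiR r (A++C))[p]'(by omega) := by
      exact List.getElem_append_left (by omega)
    have hgr : (psiR r (A++C))[p]'(by omega) =
        (if ∃ p' : ℕ, p' < p ∧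
          MatchPair (A++C) (zigR r (A++C).length p') (zigR r (A++C).length p)
        then false else true) := by
      simp only [psiR, List.getElem_ofFn]
    rw [hr, hgr, hwlen, hvlen]
    apply if_congr _ rfl rfl
    constructor
    · rintro ⟨p', hp1, hm⟩
      refine ⟨p', hp1, ?_⟩
      have hpc' : p' < 2*C.length + 2*r := by omega
      rw [zig_outer r B.length C.length p' hpc', zig_outer r B.length C.length p hcase] at hm
      rw [← hAC] at hm
      exact (matchpair_outer A B C hB _ _
        (by have := zig_range r C.length p' hpc'; omega)
        (by have := zig_range r C.length p hcase; omega)).mpr hm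
    · rintro ⟨p', hp1, hm⟩
      refine ⟨p', hp1, ?_⟩
      have hpc' : p' < 2*C.length + 2*r := by omega
      rw [zig_outer r B.length C.length p' hpc', zig_outer r B.length C.length p hcase, ← hAC]
      exact (matchpair_outer A B C hB _ _
        (by have := zig_range r C.length p' hpc'; omega)
        (by have := zig_range r C.length p hcase; omega)).mp hm
  · -- inner part
    set q := p - (2*C.length + 2*r) with hqdef
    have hqb : q < B.length := by omega
    have hpq : p = 2*C.length + 2*r + q := by omega
    have hr : (psiR r (A++C) ++ psiR 0 B)[p] = (psiR 0 B)[q]'(by omega) := by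
      rw [List.getElem_append_right (by omega)]
      congr 1; omega
    have hgr : (psiR 0 B)[q]'(by omega) =
        (if ∃ q' : ℕ, q' < q ∧
          MatchPair B (zigR 0 B.length q') (zigR 0 B.length q)
        then false else true) := by
      simp only [psiR, List.getElem_ofFn]
    rw [hr, hgr, hwlen]
    apply if_congr _ rfl rfl
    have hzp : zigR r (2*C.length+2*r+B.length) p = A.length + zigR 0 B.length q := by
      rw [hpq, zig_inner r B.length C.length q hqb, hAC]
    constructor
    · rintro ⟨p', hp1, hm⟩
      rcases Nat.lt_or_ge p' (2*C.length + 2*r) with hc' | hc'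
      · -- impossible: cross match
        exfalso
        rw [hzp] at hm
        have hx1 : A.length ≤ A.length + zigR 0 B.length q := by omega
        have hx2 : A.length + zigR 0 B.length q < A.length + B.length := by
          have := zig_inner_range B.length q hqb; omega
        have hy : zigR r (2*C.length+2*r+B.length) p' < A.length ∨
            A.length + B.length ≤ zigR r (2*C.length+2*r+B.length) p' := by
          have := zig_outer_range r B.length C.length p' hc'
          omega
        exact no_cross A B C hB _ _ hx1 hx2 hy (Or.symm hm)
      · refine ⟨p' - (2*C.length + 2*r), by omega, ?_⟩
        have hq'b : p' - (2*C.length + 2*r) < B.length := by omega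
        have hzp' : zigR r (2*C.length+2*r+B.length) p'
            = A.length + zigR 0 B.length (p' - (2*C.length + 2*r)) := by
          have e' : zigR r (2*C.length+2*r+B.length)
              (2*C.length+2*r + (p' - (2*C.length+2*r)))
              = A.length + zigR 0 B.length (p' - (2*C.length+2*r)) := by
            rw [zig_inner r B.length C.length _ hq'b, hAC]
          rwa [show 2*C.length+2*r + (p' - (2*C.length+2*r)) = p' from by omega] at e'
        rw [hzp, hzp'] at hm
        exact (matchpair_mid A B C hB _ _
          (zig_inner_range B.length _ hq'b) (zig_inner_range B.length q hqb)).mp hm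
    · rintro ⟨q', hq1, hm⟩
      refine ⟨2*C.length + 2*r + q', by omega, ?_⟩
      have hq'b : q' < B.length := by omega
      rw [hzp, zig_inner r B.length C.length q' hq'b, ← hAC]
      exact (matchpair_mid A B C hB _ _
        (zig_inner_range B.length _ hq'b) (zig_inner_range B.length q hqb)).mpr hm

end Main

end DyckBij
end
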